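/- Let F be a field, N ⊴ G groups, and let R : N → GL(W) be an irreducible representation over F such that End_{FN}(W) = F and R extends to a representation S : G → GL(W). Then: (a) every irreducible FG-module lying over W is isomorphic to U ⊗_F W for some irreducible FG-module U acted upon trivially by N (where G acts on U ⊗_F W via g(u⊗w) = gu ⊗ S(g)w); (b) if U is an irreducible FG-module with trivial N-action, then U ⊗_F W is an irreducible FG-module; (c) if U₁, U₂ are irreducible FG-modules with trivial N-action and U₁ ⊗_F W ≅ U₂ ⊗_F W as FG-modules, then U₁ ≅ U₂ as FG-modules. -/

import Mathlib

open scoped TensorProduct DirectSum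

section Preliminaries

variable (F : Type*) [Field F]

/-- Isomorphism (equivalence) of representations: an `F`-linear equivalence intertwining
the two actions. -/
def RepIso {G : Type*} [Monoid G] {V V' : Type*} [AddCommMonoid V] [Module F V]
    [AddCommMonoid V'] [Module F V'] (ρ : Representation F G V) (τ : Representation F G V') :
    Prop :=
  ∃ e : V ≃ₗ[F] V', ∀ (g : G) (v : V), e (ρ g v) = τ g (e v)

/-- Irreducibility of a representation: the space is nonzero and admits no invariant
subspaces other than `⊥` and `⊤`. -/
def IsIrreducibleRep {G : Type*} [Monoid G] {V : Type*} [AddCommMonoid V] [Module F V]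
    (ρ : Representation F G V) : Prop :=
  Nontrivial V ∧ ∀ p : Submodule F V, (∀ g : G, ∀ v ∈ p, ρ g v ∈ p) → p = ⊥ ∨ p = ⊤

/-- The subrepresentation on an invariant submodule. -/
def subRep {G : Type*} [Monoid G] {V : Type*} [AddCommMonoid V] [Module F V]
    (ρ : Representation F G V) (p : Submodule F V) (hp : ∀ g : G, ∀ v ∈ p, ρ g v ∈ p) :
    Representation F G ↥p where
  toFun g := (ρ g).restrict (fun v hv => hp g v hv)
  map_one' := by ext v; simp [LinearMap.restrict_apply]
  map_mul' g₁ g₂ := by ext v; simp [LinearMap.restrict_apply]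

/-- A representation is completely reducible if the underlying module is the sum of its
irreducible invariant submodules. -/
def IsCompletelyReducibleRep {G : Type*} [Monoid G] {V : Type*} [AddCommMonoid V]
    [Module F V] (ρ : Representation F G V) : Prop :=
  sSup {q : Submodule F V |
    ∃ hq : ∀ g : G, ∀ v ∈ q, ρ g v ∈ q, IsIrreducibleRep F (subRep F ρ q hq)} = ⊤

/-- The homogeneous component determined by `σ`: the sum of all irreducible invariant
submodules whose subrepresentation is isomorphic to `σ`. -/
noncomputable def homComponent {G : Type*} [Monoid G] {V W : Type*} [AddCommMonoid V]
    [Module F V] [AddCommMonoid W] [Module F W] (ρ : Representation F G V)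
    (σ : Representation F G W) : Submodule F V :=
  sSup {q : Submodule F V |
    ∃ hq : ∀ g : G, ∀ v ∈ q, ρ g v ∈ q,
      IsIrreducibleRep F (subRep F ρ q hq) ∧ RepIso F (subRep F ρ q hq) σ}

/-- The set of all homogeneous components of a representation. -/
noncomputable def homComponents {G : Type*} [Monoid G] {V : Type*} [AddCommMonoid V]
    [Module F V] (ρ : Representation F G V) : Set (Submodule F V) :=
  {S | ∃ (q : Submodule F V) (hq : ∀ g : G, ∀ v ∈ q, ρ g v ∈ q),
      IsIrreducibleRep F (subRep F ρ q hq) ∧ S = homComponent F ρ (subRep F ρ q hq)}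

/-- A representation `ρ` lies over `σ` if it admits an invariant submodule whose
subrepresentation is isomorphic to `σ`. -/
def LiesOver {G : Type*} [Monoid G] {V W : Type*} [AddCommMonoid V] [Module F V]
    [AddCommMonoid W] [Module F W] (ρ : Representation F G V) (σ : Representation F G W) :
    Prop :=
  ∃ (q : Submodule F V) (hq : ∀ g : G, ∀ v ∈ q, ρ g v ∈ q),
    RepIso F (subRep F ρ q hq) σ

/-- The stabilizer in `G` of a subspace of a representation space. -/
def stabSubgroup {G : Type*} [Group G] {V : Type*} [AddCommGroup V] [Module F V]
    (ρ : Representation F G V) (S : Submodule F V) : Subgroup G where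
  carrier := {g : G | S.map (ρ g) = S}
  one_mem' := by
    show S.map (ρ 1) = S
    rw [map_one, Module.End.one_eq_id]
    exact Submodule.map_id S
  mul_mem' := by
    intro a b ha hb
    show S.map (ρ (a * b)) = S
    rw [map_mul, Module.End.mul_eq_comp, Submodule.map_comp, hb, ha]
  inv_mem' := by
    intro a ha
    show S.map (ρ a⁻¹) = S
    conv_lhs => rw [← ha]
    rw [← Submodule.map_comp, ← Module.End.mul_eq_comp, ← map_mul, inv_mul_cancel, map_one,
      Module.End.one_eq_id, Submodule.map_id]

theorem stabSubgroup_mapsTo {G : Type*} [Group G] {V : Type*} [AddCommGroup V] [Module F V]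
    (ρ : Representation F G V) (S : Submodule F V) :
    ∀ g : ↥(stabSubgroup F ρ S), ∀ v ∈ S, ρ (g : G) v ∈ S := by
  intro g v hv
  have hg : S.map (ρ (g : G)) = S := g.2
  have := Submodule.mem_map_of_mem (f := ρ (g : G)) hv
  rwa [hg] at this

/-- Outer tensor product of representations of two groups. -/
noncomputable def outerRep {G₁ G₂ : Type*} [Monoid G₁] [Monoid G₂] {V₁ V₂ : Type*}
    [AddCommMonoid V₁] [Module F V₁] [AddCommMonoid V₂] [Module F V₂]
    (ρ₁ : Representation F G₁ V₁) (ρ₂ : Representation F G₂ V₂) :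
    Representation F (G₁ × G₂) (V₁ ⊗[F] V₂) :=
  Representation.tprod (ρ₁.comp (MonoidHom.fst G₁ G₂)) (ρ₂.comp (MonoidHom.snd G₁ G₂))

/-- A projective representation with factor set `α`. -/
def IsProjRep {G : Type*} [Group G] {W : Type*} [AddCommGroup W] [Module F W]
    (X : G → (W →ₗ[F] W)) (α : G → G → Fˣ) : Prop :=
  (∀ g : G, Function.Bijective (X g)) ∧
    ∀ g₁ g₂ : G, (X g₁) ∘ₗ (X g₂) = ((α g₁ g₂ : F)) • X (g₁ * g₂)

/-- Irreducibility of a projective representation: no proper nonzero invariant subspace. -/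
def IsProjIrred {G : Type*} [Group G] {W : Type*} [AddCommGroup W] [Module F W]
    (X : G → (W →ₗ[F] W)) : Prop :=
  Nontrivial W ∧ ∀ p : Submodule F W, (∀ g : G, ∀ w ∈ p, X g w ∈ p) → p = ⊥ ∨ p = ⊤

/-- `D` is a system of representatives for the `(H₁,H₂)`-double cosets in `G`. -/
def IsDCosetReps {G : Type*} [Group G] (H₁ H₂ : Subgroup G) (D : Set G) : Prop :=
  ∀ g : G, ∃! d : G, d ∈ D ∧ ∃ h₁ ∈ H₁, ∃ h₂ ∈ H₂, g = h₁ * d * h₂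

end Preliminaries

section Induction

variable (F : Type*) [Field F] {G : Type*} [Group G] (H : Subgroup G)
variable {W : Type*} [AddCommGroup W] [Module F W] (σ : Representation F ↥H W)

/-- The submodule of relations defining the induced module `FG ⊗_{FH} W` as a quotient
of `FG ⊗_F W`. -/
noncomputable def indRel : Submodule (MonoidAlgebra F G) (MonoidAlgebra F G ⊗[F] W) :=
  Submodule.span (MonoidAlgebra F G)
    {z | ∃ (x : H) (w : W),
      z = (MonoidAlgebra.single (x : G) (1 : F)) ⊗ₜ[F] w
            - (1 : MonoidAlgebra F G) ⊗ₜ[F] (σ x w)}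

/-- The underlying space of the induced module `ind_H^G W = FG ⊗_{FH} W`. -/
noncomputable def IndCar := (MonoidAlgebra F G ⊗[F] W) ⧸ indRel F H σ

noncomputable instance : AddCommGroup (IndCar F H σ) :=
  inferInstanceAs (AddCommGroup ((MonoidAlgebra F G ⊗[F] W) ⧸ indRel F H σ))

noncomputable instance : Module (MonoidAlgebra F G) (IndCar F H σ) :=
  inferInstanceAs (Module (MonoidAlgebra F G) ((MonoidAlgebra F G ⊗[F] W) ⧸ indRel F H σ))

noncomputable instance : Module F (IndCar F H σ) :=
  inferInstanceAs (Module F ((MonoidAlgebra F G ⊗[F] W) ⧸ indRel F H σ))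

noncomputable instance : IsScalarTower F (MonoidAlgebra F G) (IndCar F H σ) :=
  inferInstanceAs (IsScalarTower F (MonoidAlgebra F G)
    ((MonoidAlgebra F G ⊗[F] W) ⧸ indRel F H σ))

/-- The induced representation of `G` on `ind_H^G W = FG ⊗_{FH} W`. -/
noncomputable def IndRep : Representation F G (IndCar F H σ) where
  toFun g :=
    { toFun := fun v => (MonoidAlgebra.single g (1 : F) : MonoidAlgebra F G) • v
      map_add' := fun a b => smul_add _ a b
      map_smul' := fun c v => smul_comm _ c v }
  map_one' := by
    ext v
    show MonoidAlgebra.single (1 : G) (1 : F) • v = v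
    rw [← MonoidAlgebra.one_def, one_smul]
  map_mul' g₁ g₂ := by
    ext v
    show MonoidAlgebra.single (g₁ * g₂) (1 : F) • v = _
    rw [show (MonoidAlgebra.single (g₁ * g₂) (1 : F) : MonoidAlgebra F G)
          = MonoidAlgebra.single g₁ 1 * MonoidAlgebra.single g₂ 1 by
        rw [MonoidAlgebra.single_mul_single, one_mul], mul_smul]
    rfl

end Induction

section DirectSums

variable (F : Type*) [Field F] {G : Type*} [Monoid G]

/-- The direct sum of a family of representations. -/
noncomputable def dsumRep {ι : Type*} {V : ι → Type*} [∀ i, AddCommGroup (V i)]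
    [∀ i, Module F (V i)] (ρ : ∀ i, Representation F G (V i)) :
    Representation F G (⨁ i, V i) where
  toFun g := DFinsupp.mapRange.linearMap (fun i => ρ i g)
  map_one' := by
    simp only [map_one]
    exact DFinsupp.mapRange.linearMap_id
  map_mul' g₁ g₂ := by
    simp only [map_mul, Module.End.mul_eq_comp]
    exact DFinsupp.mapRange.linearMap_comp (fun i => ρ i g₁) (fun i => ρ i g₂)

end DirectSums

section Conjugation

variable {G : Type*} [Group G]

/-- Conjugation `x ↦ g x g⁻¹` as a monoid homomorphism of a normal subgroup. -/
def conjHom {N : Subgroup G} (hN : N.Normal) (g : G) : ↥N →* ↥N where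
  toFun x := ⟨g * (x : G) * g⁻¹, hN.conj_mem x.1 x.2 g⟩
  map_one' := by ext; simp
  map_mul' x y := by ext; simp [mul_assoc]

/-- The conjugate subgroup `xHx⁻¹`. -/
def conjSubgroup (x : G) (H : Subgroup G) : Subgroup G :=
  H.map (MulAut.conj x).toMonoidHom

/-- Conjugating back: the homomorphism `K → H`, `k ↦ x⁻¹ k x`, for `K ≤ xHx⁻¹`. -/
def unconjHom (x : G) (H : Subgroup G) {K : Subgroup G} (hK : K ≤ conjSubgroup x H) :
    ↥K →* ↥H where
  toFun k := ⟨x⁻¹ * (k : G) * x, by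
    obtain ⟨h, hh, e⟩ := hK k.2
    have : x⁻¹ * (k : G) * x = h := by
      rw [← e]; simp [MulAut.conj_apply, mul_assoc]
    rw [this]; exact hh⟩
  map_one' := by ext; simp
  map_mul' a b := by
    ext
    show x⁻¹ * (↑a * ↑b) * x = (x⁻¹ * ↑a * x) * (x⁻¹ * ↑b * x)
    group

/-- The homomorphism `K ∩ xHx⁻¹ → H` (with the source regarded as a subgroup of `K`),
given by `k ↦ x⁻¹ k x`. -/
def mackeyHom (x : G) (H K : Subgroup G) :
    ↥((K ⊓ conjSubgroup x H).subgroupOf K) →* ↥H where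
  toFun l := ⟨x⁻¹ * ((l : ↥K) : G) * x, by
    have h2 : ((l : ↥K) : G) ∈ K ⊓ conjSubgroup x H := l.2
    obtain ⟨h, hh, e⟩ := h2.2
    have : x⁻¹ * ((l : ↥K) : G) * x = h := by
      rw [← e]; simp [MulAut.conj_apply, mul_assoc]
    rw [this]; exact hh⟩
  map_one' := by ext; simp
  map_mul' a b := by
    ext
    show x⁻¹ * (↑↑a * ↑↑b) * x = (x⁻¹ * ↑↑a * x) * (x⁻¹ * ↑↑b * x)
    group

end Conjugation


section GalAux

variable {F : Type*} [Field F]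

theorem gal_exists_dual {U : Type*} [AddCommGroup U] [Module F U] {u : U} (hu : u ≠ 0) :
    ∃ f : U →ₗ[F] F, f u = 1 := by
  classical
  let b := Module.Basis.ofVectorSpace F U
  have hrepr : b.repr u ≠ 0 := by
    intro h
    exact hu (by simpa using congrArg b.repr.symm h)
  obtain ⟨j, hj⟩ : ∃ j, b.repr u j ≠ 0 := by
    by_contra h
    push_neg at h
    exact hrepr (Finsupp.ext h)
  refine ⟨(b.repr u j)⁻¹ • b.coord j, ?_⟩
  simp [Module.Basis.coord_apply, inv_mul_cancel₀ hj]

theorem gal_tmul_ne_zero {U W : Type*} [AddCommGroup U] [Module F U] [AddCommGroup W]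
    [Module F W] {u : U} {w : W} (hu : u ≠ 0) (hw : w ≠ 0) : u ⊗ₜ[F] w ≠ 0 := by
  obtain ⟨f, hf⟩ := gal_exists_dual (F := F) hu
  intro h
  have := congrArg (fun z => (TensorProduct.lid F W) (LinearMap.rTensor W f z)) h
  simp [hf] at this
  exact hw this

theorem gal_tmul_left_cancel {U W : Type*} [AddCommGroup U] [Module F U] [AddCommGroup W]
    [Module F W] {u : U} {w : W} (hw : w ≠ 0) (h : u ⊗ₜ[F] w = 0) : u = 0 := by
  by_contra hu
  exact gal_tmul_ne_zero hu hw h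

end GalAux

section GalDensity

variable {F : Type*} [Field F] {M : Type*} [Monoid M] {W : Type*} [AddCommGroup W]
  [Module F W]

/-- The image of the group algebra in `End(W)`, as an `F`-subspace. -/
noncomputable def galA (σ : Representation F M W) : Submodule F (W →ₗ[F] W) :=
  Submodule.span F (Set.range fun m : M => (σ m : W →ₗ[F] W))

theorem gal_one_mem (σ : Representation F M W) : LinearMap.id ∈ galA σ :=
  Submodule.subset_span ⟨1, by simp only [map_one]; rfl⟩

theorem gal_comp_mem (σ : Representation F M W) (m : M) {a : W →ₗ[F] W} (ha : a ∈ galA σ) :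
    (σ m) ∘ₗ a ∈ galA σ := by
  induction ha using Submodule.span_induction with
  | mem x hx =>
    obtain ⟨m', rfl⟩ := hx
    exact Submodule.subset_span ⟨m * m', by simp only [map_mul]; rfl⟩
  | zero => simpa using zero_mem (galA σ)
  | add x y hx hy ihx ihy => simpa [LinearMap.comp_add] using add_mem ihx ihy
  | smul c x hx ihx => simpa [LinearMap.comp_smul] using Submodule.smul_mem _ c ihx

private theorem gal_density_fin (σ : Representation F M W)
    (hirr : IsIrreducibleRep F σ)
    (hEnd : ∀ f : W →ₗ[F] W,
      (∀ (m : M) (w : W), f (σ m w) = σ m (f w)) → ∃ c : F, ∀ w : W, f w = c • w) :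
    ∀ (k : ℕ) (w t : Fin k → W), LinearIndependent F w →
      ∃ a ∈ galA σ, ∀ i, a (w i) = t i := by
  intro k
  induction k with
  | zero => exact fun w t _ => ⟨0, zero_mem _, fun i => i.elim0⟩
  | succ k IH =>
    intro w t hw
    have key : ∀ (j : Fin (k + 1)) (x : W),
        ∃ a ∈ galA σ, a (w j) = x ∧ ∀ i, i ≠ j → a (w i) = 0 := by
      intro j x
      set w' : Fin k → W := fun i => w (j.succAbove i) with hw'def
      have hw'indep : LinearIndependent F w' :=
        hw.comp j.succAbove Fin.succAbove_right_injective
      let M₀ : Submodule F W :=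
        { carrier := {y | ∃ a ∈ galA σ, (∀ i', a (w' i') = 0) ∧ a (w j) = y}
          zero_mem' := ⟨0, zero_mem _, by simp, by simp⟩
          add_mem' := by
            rintro y z ⟨a, ha, h0, rfl⟩ ⟨a', ha', h0', rfl⟩
            exact ⟨a + a', add_mem ha ha', fun i' => by simp [h0 i', h0' i'], by simp⟩
          smul_mem' := by
            rintro c y ⟨a, ha, h0, rfl⟩
            exact ⟨c • a, Submodule.smul_mem _ c ha, fun i' => by simp [h0 i'], by simp⟩ }
      have hM₀inv : ∀ m : M, ∀ v ∈ M₀, σ m v ∈ M₀ := by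
        rintro m v ⟨a, ha, h0, rfl⟩
        exact ⟨(σ m) ∘ₗ a, gal_comp_mem σ m ha, fun i' => by simp [h0 i'], by simp⟩
      rcases hirr.2 M₀ hM₀inv with hbot | htop
      · exfalso
        have keyzero : ∀ a ∈ galA σ, (∀ i', a (w' i') = 0) → a (w j) = 0 := by
          intro a ha h0
          have : a (w j) ∈ M₀ := ⟨a, ha, h0, rfl⟩
          rw [hbot] at this
          simpa using this
        have hex : ∀ (i : Fin k) (y : W),
            ∃ a, a ∈ galA σ ∧ ∀ i', a (w' i') = if i' = i then y else 0 := by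
          intro i y
          obtain ⟨a, ha, h⟩ := IH w' (fun i' => if i' = i then y else 0) hw'indep
          exact ⟨a, ha, h⟩
        choose aix haixA haixV using hex
        have hwd : ∀ (i : Fin k) (y : W) (a : W →ₗ[F] W), a ∈ galA σ →
            (∀ i', a (w' i') = if i' = i then y else 0) → a (w j) = aix i y (w j) := by
          intro i y a ha hv
          have h0 : ∀ i', (a - aix i y) (w' i') = 0 := by
            intro i'
            simp [hv i', haixV i y i']
          have := keyzero (a - aix i y) (sub_mem ha (haixA i y)) h0
          simpa [sub_eq_zero] using this
        have hf : ∀ i : Fin k, ∃ c : F, ∀ y, aix i y (w j) = c • y := by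
          intro i
          have hadd : ∀ y z, aix i (y + z) (w j) = aix i y (w j) + aix i z (w j) := by
            intro y z
            have := hwd i (y + z) (aix i y + aix i z) (add_mem (haixA i y) (haixA i z))
              (by intro i'; by_cases h : i' = i <;> simp [haixV, h])
            simpa using this.symm
          have hsmul : ∀ (c : F) (y), aix i (c • y) (w j) = c • aix i y (w j) := by
            intro c y
            have := hwd i (c • y) (c • aix i y) (Submodule.smul_mem _ c (haixA i y))
              (by intro i'; by_cases h : i' = i <;> simp [haixV, h])
            simpa using this.symm
          have hcomm : ∀ (m : M) (y), aix i (σ m y) (w j) = σ m (aix i y (w j)) := by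
            intro m y
            have := hwd i (σ m y) ((σ m) ∘ₗ aix i y) (gal_comp_mem σ m (haixA i y))
              (by intro i'; by_cases h : i' = i <;> simp [haixV, h])
            simpa using this.symm
          obtain ⟨c, hc⟩ := hEnd
            { toFun := fun y => aix i y (w j)
              map_add' := hadd
              map_smul' := hsmul } (by intro m y; exact hcomm m y)
          exact ⟨c, fun y => hc y⟩
        choose c hc using hf
        have hsum : w j = ∑ i, c i • w' i := by
          set b : W →ₗ[F] W := LinearMap.id - ∑ i, aix i (w' i) with hbdef
          have hb : b ∈ galA σ :=
            sub_mem (gal_one_mem σ) (sum_mem fun i _ => haixA _ _)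
          have hb0 : ∀ i', b (w' i') = 0 := by
            intro i'
            simp only [hbdef, LinearMap.sub_apply, LinearMap.id_apply, LinearMap.sum_apply]
            rw [Finset.sum_congr rfl (fun i _ => haixV i (w' i) i')]
            simp
          have hbj := keyzero b hb hb0
          have : w j = ∑ i, aix i (w' i) (w j) := by
            have := sub_eq_zero.mp (by simpa [hbdef] using hbj)
            simpa using this
          rw [this]
          exact Finset.sum_congr rfl fun i _ => hc i (w' i)
        have hmem : w j ∈ Submodule.span F (w '' Set.range j.succAbove) := by
          rw [hsum]
          exact sum_mem fun i _ => Submodule.smul_mem _ _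
            (Submodule.subset_span ⟨j.succAbove i, ⟨i, rfl⟩, rfl⟩)
        exact LinearIndependent.notMem_span_image hw (by rintro ⟨i, hi⟩; exact Fin.succAbove_ne j i hi) hmem
      · have hx : x ∈ M₀ := htop ▸ Submodule.mem_top
        obtain ⟨a, ha, h0, hxa⟩ := hx
        refine ⟨a, ha, hxa, fun i hij => ?_⟩
        obtain ⟨i', rfl⟩ := Fin.exists_succAbove_eq hij
        exact h0 i'
    choose aj hajA hajV using fun j => key j (t j)
    refine ⟨∑ j, aj j, sum_mem fun j _ => hajA j, fun i => ?_⟩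
    rw [LinearMap.sum_apply, Finset.sum_eq_single i]
    · exact (hajV i).1
    · exact fun j _ hji => (hajV j).2 i (Ne.symm hji)
    · simp

theorem gal_density (σ : Representation F M W)
    (hirr : IsIrreducibleRep F σ)
    (hEnd : ∀ f : W →ₗ[F] W,
      (∀ (m : M) (w : W), f (σ m w) = σ m (f w)) → ∃ c : F, ∀ w : W, f w = c • w)
    {ι : Type*} (s : Finset ι) (w t : ι → W)
    (hw : LinearIndependent F (fun i : s => w i)) :
    ∃ a ∈ galA σ, ∀ i ∈ s, a (w i) = t i := by
  classical
  let e := s.equivFin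
  obtain ⟨a, ha, h⟩ := gal_density_fin σ hirr hEnd s.card (fun i => w (e.symm i))
    (fun i => t (e.symm i)) (hw.comp e.symm e.symm.injective)
  refine ⟨a, ha, fun i hi => ?_⟩
  have := h (e ⟨i, hi⟩)
  simpa using this

end GalDensity

section GalStruct

variable {F : Type*} [Field F] {M : Type*} [Monoid M] {U W : Type*}
  [AddCommGroup U] [Module F U] [AddCommGroup W] [Module F W]

theorem gal_lTensor_mem (σ : Representation F M W) (p : Submodule F (U ⊗[F] W))
    (hp : ∀ m : M, ∀ z ∈ p, LinearMap.lTensor U (σ m) z ∈ p)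
    {a : W →ₗ[F] W} (ha : a ∈ galA σ) : ∀ z ∈ p, LinearMap.lTensor U a z ∈ p := by
  induction ha using Submodule.span_induction with
  | mem x hx =>
    obtain ⟨m, rfl⟩ := hx
    exact hp m
  | zero => intro z hz; simpa [LinearMap.lTensor_zero] using zero_mem p
  | add x y hx hy ihx ihy =>
    intro z hz
    simpa [LinearMap.lTensor_add] using add_mem (ihx z hz) (ihy z hz)
  | smul cx x hx ihx =>
    intro z hz
    simpa [LinearMap.lTensor_smul] using Submodule.smul_mem p cx (ihx z hz)

theorem gal_exists_pure (σ : Representation F M W)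
    (hirr : IsIrreducibleRep F σ)
    (hEnd : ∀ f : W →ₗ[F] W,
      (∀ (m : M) (w : W), f (σ m w) = σ m (f w)) → ∃ c : F, ∀ w : W, f w = c • w)
    (p : Submodule F (U ⊗[F] W))
    (hp : ∀ m : M, ∀ z ∈ p, LinearMap.lTensor U (σ m) z ∈ p)
    {z : U ⊗[F] W} (hz : z ∈ p) (hz0 : z ≠ 0) :
    ∃ u : U, u ≠ 0 ∧ ∀ w : W, u ⊗ₜ[F] w ∈ p := by
  classical
  set b := Module.Basis.ofVectorSpace F W with hbdef
  set E : (U ⊗[F] W) ≃ₗ[F] (Module.Basis.ofVectorSpaceIndex F W →₀ U) :=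
    (TensorProduct.congr (LinearEquiv.refl F U) b.repr).trans
      (TensorProduct.finsuppScalarRight F F U (Module.Basis.ofVectorSpaceIndex F W)) with hEdef
  have hEpure : ∀ (u : U) (w : W) (i : Module.Basis.ofVectorSpaceIndex F W),
      E (u ⊗ₜ[F] w) i = b.repr w i • u := by
    intro u w i
    simp [hEdef, TensorProduct.congr_tmul,
      TensorProduct.finsuppScalarRight_apply_tmul_apply]
  have hdecomp : z = ∑ j ∈ (E z).support, (E z) j ⊗ₜ[F] (b j) := by
    apply E.injective
    rw [map_sum]
    ext i
    rw [Finsupp.finset_sum_apply]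
    have hterm : ∀ j ∈ (E z).support,
        E ((E z) j ⊗ₜ[F] b j) i = if j = i then (E z) j else 0 := by
      intro j _
      rw [hEpure, Module.Basis.repr_self, Finsupp.single_apply]
      split_ifs <;> simp
    rw [Finset.sum_congr rfl hterm, Finset.sum_ite_eq' (E z).support i (fun j => (E z) j)]
    by_cases hi : i ∈ (E z).support
    · simp [hi]
    · simp [hi, Finsupp.notMem_support_iff.mp hi]
  have hf0 : E z ≠ 0 := fun h => hz0 (by simpa using E.injective (by simp [h]))
  obtain ⟨j0, hj0⟩ : ∃ j0, j0 ∈ (E z).support :=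
    Finset.nonempty_iff_ne_empty.mpr (fun h => hf0 (Finsupp.support_eq_empty.mp h))
  have hbi : LinearIndependent F (fun j : (E z).support => b j) :=
    b.linearIndependent.comp _ Subtype.val_injective
  obtain ⟨a, haA, hav⟩ := gal_density σ hirr hEnd (E z).support (fun j => b j)
    (fun j => if j = j0 then b j0 else 0) hbi
  have hz' : (E z) j0 ⊗ₜ[F] (b j0) ∈ p := by
    have h1 := gal_lTensor_mem σ p hp haA z hz
    have h2 : LinearMap.lTensor U a z = (E z) j0 ⊗ₜ[F] (b j0) := by
      conv_lhs => rw [hdecomp]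
      rw [map_sum]
      have hterm : ∀ j ∈ (E z).support,
          LinearMap.lTensor U a ((E z) j ⊗ₜ[F] b j)
            = if j = j0 then (E z) j ⊗ₜ[F] b j0 else 0 := by
        intro j hj
        rw [LinearMap.lTensor_tmul, hav j hj]
        split_ifs <;> simp
      rw [Finset.sum_congr rfl hterm,
        Finset.sum_ite_eq' (E z).support j0 (fun j => (E z) j ⊗ₜ[F] b j0)]
      simp [hj0]
    rwa [h2] at h1
  refine ⟨(E z) j0, Finsupp.mem_support_iff.mp hj0, fun w => ?_⟩
  have hbi1 : LinearIndependent F (fun j : ({j0} : Finset (Module.Basis.ofVectorSpaceIndex F W)) => b j) :=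
    b.linearIndependent.comp _ Subtype.val_injective
  obtain ⟨a', ha'A, ha'v⟩ := gal_density σ hirr hEnd {j0} (fun j => b j) (fun _ => w) hbi1
  have h3 := gal_lTensor_mem σ p hp ha'A _ hz'
  rwa [LinearMap.lTensor_tmul, ha'v j0 (Finset.mem_singleton_self j0)] at h3

theorem gal_hom_tmul (σ : Representation F M W)
    (hirr : IsIrreducibleRep F σ)
    (hEnd : ∀ f : W →ₗ[F] W,
      (∀ (m : M) (w : W), f (σ m w) = σ m (f w)) → ∃ c : F, ∀ w : W, f w = c • w)
    (ψ : W →ₗ[F] U ⊗[F] W)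
    (hψ : ∀ (m : M) (w : W), ψ (σ m w) = LinearMap.lTensor U (σ m) (ψ w)) :
    ∃ u : U, ∀ w, ψ w = u ⊗ₜ[F] w := by
  classical
  have : Nontrivial W := hirr.1
  obtain ⟨w₀, hw₀⟩ := exists_ne (0 : W)
  set b := Module.Basis.ofVectorSpace F U with hbdef
  set E : (U ⊗[F] W) ≃ₗ[F] (Module.Basis.ofVectorSpaceIndex F U →₀ W) :=
    (TensorProduct.congr b.repr (LinearEquiv.refl F W)).trans
      (TensorProduct.finsuppScalarLeft F W (Module.Basis.ofVectorSpaceIndex F U)) with hEdef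
  have hEpure : ∀ (u : U) (w : W) (j : Module.Basis.ofVectorSpaceIndex F U),
      E (u ⊗ₜ[F] w) j = b.repr u j • w := by
    intro u w j
    simp [hEdef, TensorProduct.congr_tmul,
      TensorProduct.finsuppScalarLeft_apply_tmul_apply]
  have hEequiv : ∀ (m : M) (z : U ⊗[F] W) (j : Module.Basis.ofVectorSpaceIndex F U),
      E (LinearMap.lTensor U (σ m) z) j = σ m (E z j) := by
    intro m z j
    induction z using TensorProduct.induction_on with
    | zero => simp
    | tmul u w => rw [LinearMap.lTensor_tmul, hEpure, hEpure, map_smul]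
    | add x y ihx ihy => simp only [map_add, Finsupp.add_apply, ihx, ihy]
  have hφ : ∀ j : Module.Basis.ofVectorSpaceIndex F U, ∃ c : F, ∀ w, E (ψ w) j = c • w := by
    intro j
    obtain ⟨c, hc⟩ := hEnd
      { toFun := fun w => E (ψ w) j
        map_add' := by intro x y; simp
        map_smul' := by intro c x; simp }
      (by intro m w; show E (ψ (σ m w)) j = σ m (E (ψ w) j); rw [hψ m w, hEequiv])
    exact ⟨c, fun w => hc w⟩
  choose c hc using hφ
  have hcsup : ∀ j, c j ≠ 0 → j ∈ (E (ψ w₀)).support := by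
    intro j hj
    rw [Finsupp.mem_support_iff, hc j w₀]
    exact smul_ne_zero hj hw₀
  refine ⟨b.repr.symm (Finsupp.onFinset _ c hcsup), fun w => ?_⟩
  apply E.injective
  ext j
  rw [hc j w, hEpure]
  simp [Finsupp.onFinset_apply]

theorem gal_tmul_left_inj {w : W} (hw : w ≠ 0) {x y : U} (h : x ⊗ₜ[F] w = y ⊗ₜ[F] w) :
    x = y := by
  have h0 : (x - y) ⊗ₜ[F] w = 0 := by rw [TensorProduct.sub_tmul, h, sub_self]
  exact sub_eq_zero.mp (gal_tmul_left_cancel hw h0)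

end GalStruct

universe u

theorem gallagher
    (F : Type*) [Field F] {G : Type*} [Group G] (N : Subgroup G) (hN : N.Normal)
    (W : Type u) [AddCommGroup W] [Module F W] (σ : Representation F ↥N W)
    (hσ : IsIrreducibleRep F σ)
    (hEnd : ∀ f : W →ₗ[F] W,
      (∀ (n : ↥N) (w : W), f (σ n w) = σ n (f w)) → ∃ c : F, ∀ w : W, f w = c • w)
    (ρW : Representation F G W) (hext : ∀ n : ↥N, ρW (n : G) = σ n) :
    -- (a)
    (∀ (V : Type u) (_ : AddCommGroup V) (_ : Module F V) (ρV : Representation F G V),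
      IsIrreducibleRep F ρV → LiesOver F (ρV.comp N.subtype) σ →
        ∃ (U : Type u) (_ : AddCommGroup U) (_ : Module F U)
          (ρU : Representation F G U),
          IsIrreducibleRep F ρU ∧ (∀ (n : ↥N) (u : U), ρU (n : G) u = u) ∧
            RepIso F ρV (ρU.tprod ρW)) ∧
    -- (b)
    (∀ (U : Type u) (_ : AddCommGroup U) (_ : Module F U) (ρU : Representation F G U),
      IsIrreducibleRep F ρU → (∀ (n : ↥N) (u : U), ρU (n : G) u = u) →
        IsIrreducibleRep F (ρU.tprod ρW)) ∧
    -- (c)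
    (∀ (U₁ : Type u) (_ : AddCommGroup U₁) (_ : Module F U₁)
        (U₂ : Type u) (_ : AddCommGroup U₂) (_ : Module F U₂)
        (ρ₁ : Representation F G U₁) (ρ₂ : Representation F G U₂),
      IsIrreducibleRep F ρ₁ → (∀ (n : ↥N) (u : U₁), ρ₁ (n : G) u = u) →
      IsIrreducibleRep F ρ₂ → (∀ (n : ↥N) (u : U₂), ρ₂ (n : G) u = u) →
      RepIso F (ρ₁.tprod ρW) (ρ₂.tprod ρW) → RepIso F ρ₁ ρ₂) := by
  classical
  have hWnt : Nontrivial W := hσ.1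
  obtain ⟨w₀, hw₀⟩ := exists_ne (0 : W)
  have hWinv : ∀ (g : G) (w : W), ρW g (ρW g⁻¹ w) = w := by
    intro g w
    rw [← Module.End.mul_apply, ← map_mul, mul_inv_cancel, map_one, Module.End.one_apply]
  have hWinv' : ∀ (g : G) (w : W), ρW g⁻¹ (ρW g w) = w := by
    intro g w
    rw [← Module.End.mul_apply, ← map_mul, inv_mul_cancel, map_one, Module.End.one_apply]
  have partb : ∀ (U : Type u) (_ : AddCommGroup U) (_ : Module F U)
      (ρU : Representation F G U),
      IsIrreducibleRep F ρU → (∀ (n : ↥N) (u : U), ρU (n : G) u = u) →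
        IsIrreducibleRep F (ρU.tprod ρW) := by
    intro U _ _ ρU hUirr hU
    have hUnt : Nontrivial U := hUirr.1
    have key : ∀ n : ↥N, (ρU.tprod ρW) ((n : G)) = LinearMap.lTensor U (σ n) := by
      intro n
      apply TensorProduct.ext'
      intro u w
      rw [Representation.tprod_apply, TensorProduct.map_tmul, hU n u, hext n,
        LinearMap.lTensor_tmul]
    constructor
    · obtain ⟨u₀, hu₀⟩ := exists_ne (0 : U)
      exact ⟨u₀ ⊗ₜ w₀, 0, gal_tmul_ne_zero hu₀ hw₀⟩
    · intro p hpinv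
      rcases eq_or_ne p ⊥ with hp0 | hp0
      · exact Or.inl hp0
      right
      obtain ⟨z, hz, hz0⟩ := (Submodule.ne_bot_iff p).mp hp0
      have hpN : ∀ n : ↥N, ∀ z ∈ p, LinearMap.lTensor U (σ n) z ∈ p := by
        intro n z hz
        rw [← key n]
        exact hpinv (n : G) z hz
      obtain ⟨u, hu, hup⟩ := gal_exists_pure σ hσ hEnd p hpN hz hz0
      let U₀ : Submodule F U :=
        { carrier := {u | ∀ w : W, u ⊗ₜ[F] w ∈ p}
          add_mem' := by
            intro a b ha hb w
            simpa [TensorProduct.add_tmul] using add_mem (ha w) (hb w)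
          zero_mem' := by
            intro w
            simpa [TensorProduct.zero_tmul] using zero_mem p
          smul_mem' := by
            intro cc a ha w
            simpa [TensorProduct.smul_tmul'] using Submodule.smul_mem p cc (ha w) }
      have hU₀inv : ∀ g : G, ∀ u ∈ U₀, ρU g u ∈ U₀ := by
        intro g u hu w
        have h1 := hpinv g _ (hu (ρW g⁻¹ w))
        rw [Representation.tprod_apply, TensorProduct.map_tmul, hWinv g w] at h1
        exact h1
      rcases hUirr.2 U₀ hU₀inv with h | h
      · exfalso
        have hmem : u ∈ U₀ := fun w => hup w
        rw [h, Submodule.mem_bot] at hmem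
        exact hu hmem
      · rw [eq_top_iff, ← TensorProduct.span_tmul_eq_top F U W, Submodule.span_le]
        rintro t ⟨u', w', rfl⟩
        exact (show u' ∈ U₀ by rw [h]; trivial) w'
  have partc : ∀ (U₁ : Type u) (_ : AddCommGroup U₁) (_ : Module F U₁)
      (U₂ : Type u) (_ : AddCommGroup U₂) (_ : Module F U₂)
      (ρ₁ : Representation F G U₁) (ρ₂ : Representation F G U₂),
      IsIrreducibleRep F ρ₁ → (∀ (n : ↥N) (u : U₁), ρ₁ (n : G) u = u) →
      IsIrreducibleRep F ρ₂ → (∀ (n : ↥N) (u : U₂), ρ₂ (n : G) u = u) →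
      RepIso F (ρ₁.tprod ρW) (ρ₂.tprod ρW) → RepIso F ρ₁ ρ₂ := by
    intro U₁ _ _ U₂ _ _ ρ₁ ρ₂ h1irr h1t h2irr h2t hiso
    obtain ⟨e, he⟩ := hiso
    have key1 : ∀ n : ↥N, (ρ₁.tprod ρW) ((n : G)) = LinearMap.lTensor U₁ (σ n) := by
      intro n
      apply TensorProduct.ext'
      intro u w
      rw [Representation.tprod_apply, TensorProduct.map_tmul, h1t n u, hext n,
        LinearMap.lTensor_tmul]
    have key2 : ∀ n : ↥N, (ρ₂.tprod ρW) ((n : G)) = LinearMap.lTensor U₂ (σ n) := by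
      intro n
      apply TensorProduct.ext'
      intro u w
      rw [Representation.tprod_apply, TensorProduct.map_tmul, h2t n u, hext n,
        LinearMap.lTensor_tmul]
    have hex : ∀ u : U₁, ∃ u₂ : U₂, ∀ w, e (u ⊗ₜ[F] w) = u₂ ⊗ₜ[F] w := by
      intro u
      obtain ⟨u₂, h⟩ := gal_hom_tmul σ hσ hEnd
        (e.toLinearMap ∘ₗ ((TensorProduct.mk F U₁ W) u)) (by
          intro n w
          show e (u ⊗ₜ[F] σ n w) = LinearMap.lTensor U₂ (σ n) (e (u ⊗ₜ[F] w))
          rw [← key2 n, ← he ((n : G)) (u ⊗ₜ[F] w)]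
          congr 1
          rw [key1 n, LinearMap.lTensor_tmul])
      exact ⟨u₂, fun w => h w⟩
    choose θ hθ using hex
    have hes : ∀ (g : G) (z : U₂ ⊗[F] W),
        e.symm ((ρ₂.tprod ρW) g z) = (ρ₁.tprod ρW) g (e.symm z) := by
      intro g z
      apply e.injective
      rw [LinearEquiv.apply_symm_apply, he, LinearEquiv.apply_symm_apply]
    have hexs : ∀ u : U₂, ∃ u₁ : U₁, ∀ w, e.symm (u ⊗ₜ[F] w) = u₁ ⊗ₜ[F] w := by
      intro u
      obtain ⟨u₁, h⟩ := gal_hom_tmul σ hσ hEnd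
        (e.symm.toLinearMap ∘ₗ ((TensorProduct.mk F U₂ W) u)) (by
          intro n w
          show e.symm (u ⊗ₜ[F] σ n w) = LinearMap.lTensor U₁ (σ n) (e.symm (u ⊗ₜ[F] w))
          rw [← key1 n, ← hes ((n : G)) (u ⊗ₜ[F] w)]
          congr 1
          rw [key2 n, LinearMap.lTensor_tmul])
      exact ⟨u₁, fun w => h w⟩
    choose θ' hθ' using hexs
    have hθθ' : ∀ u, θ' (θ u) = u := by
      intro u
      apply gal_tmul_left_inj (F := F) hw₀
      rw [← hθ' (θ u) w₀, ← hθ u w₀, LinearEquiv.symm_apply_apply]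
    have hθ'θ : ∀ u, θ (θ' u) = u := by
      intro u
      apply gal_tmul_left_inj (F := F) hw₀
      rw [← hθ (θ' u) w₀, ← hθ' u w₀, LinearEquiv.apply_symm_apply]
    have hadd : ∀ x y, θ (x + y) = θ x + θ y := by
      intro x y
      apply gal_tmul_left_inj (F := F) hw₀
      rw [← hθ (x + y) w₀, TensorProduct.add_tmul, map_add, hθ x w₀, hθ y w₀,
        ← TensorProduct.add_tmul]
    have hsmul : ∀ (cc : F) (x), θ (cc • x) = cc • θ x := by
      intro cc x
      apply gal_tmul_left_inj (F := F) hw₀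
      rw [← hθ (cc • x) w₀, ← TensorProduct.smul_tmul', map_smul, hθ x w₀,
        TensorProduct.smul_tmul']
    have hcomm : ∀ (g : G) (u : U₁), θ (ρ₁ g u) = ρ₂ g (θ u) := by
      intro g u
      apply gal_tmul_left_inj (F := F) hw₀
      rw [← hθ _ w₀]
      have h1 : (ρ₁ g u) ⊗ₜ[F] w₀ = (ρ₁.tprod ρW) g (u ⊗ₜ[F] (ρW g⁻¹ w₀)) := by
        rw [Representation.tprod_apply, TensorProduct.map_tmul, hWinv]
      rw [h1, he, hθ u, Representation.tprod_apply, TensorProduct.map_tmul, hWinv]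
    exact ⟨{ toFun := θ, invFun := θ', left_inv := hθθ', right_inv := hθ'θ,
             map_add' := hadd, map_smul' := hsmul }, fun g u => hcomm g u⟩
  have parta : ∀ (V : Type u) (_ : AddCommGroup V) (_ : Module F V)
      (ρV : Representation F G V),
      IsIrreducibleRep F ρV → LiesOver F (ρV.comp N.subtype) σ →
        ∃ (U : Type u) (_ : AddCommGroup U) (_ : Module F U)
          (ρU : Representation F G U),
          IsIrreducibleRep F ρU ∧ (∀ (n : ↥N) (u : U), ρU (n : G) u = u) ∧
            RepIso F ρV (ρU.tprod ρW) := by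
    intro V _ _ ρV hVirr hlies
    have hconj : ∀ (g : G) (n : ↥N), ∃ n' : ↥N, (n' : G) = g⁻¹ * (n : G) * g := by
      intro g n
      exact ⟨⟨g⁻¹ * (n : G) * g, by simpa using hN.conj_mem (n : G) n.2 g⁻¹⟩, rfl⟩
    let U' : Submodule F (W →ₗ[F] V) :=
      { carrier := {φ | ∀ (n : ↥N) (w : W), φ (σ n w) = ρV (n : G) (φ w)}
        add_mem' := by
          intro a b ha hb n w
          simp only [LinearMap.add_apply, ha n w, hb n w, map_add]
        zero_mem' := by
          intro n w
          simp
        smul_mem' := by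
          intro cc a ha n w
          simp only [LinearMap.smul_apply, ha n w, map_smul] }
    have hUmem : ∀ (g : G) (φ : W →ₗ[F] V), φ ∈ U' →
        (ρV g ∘ₗ φ ∘ₗ ρW g⁻¹) ∈ U' := by
      intro g φ hφ n w
      obtain ⟨n', hn'⟩ := hconj g n
      show ρV g (φ (ρW g⁻¹ (σ n w))) = ρV (n : G) (ρV g (φ (ρW g⁻¹ w)))
      have e1 : ρW g⁻¹ (σ n w) = σ n' (ρW g⁻¹ w) := by
        rw [← hext n, ← hext n', hn']
        rw [← Module.End.mul_apply, ← Module.End.mul_apply, ← map_mul, ← map_mul]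
        congr 2
        group
      rw [e1, hφ n' _, hn']
      rw [← Module.End.mul_apply (ρV g), ← map_mul, ← Module.End.mul_apply (ρV (n : G)),
        ← map_mul]
      congr 2
      group
    let ρU : Representation F G ↥U' :=
      { toFun := fun g =>
          { toFun := fun φ => ⟨ρV g ∘ₗ (φ : W →ₗ[F] V) ∘ₗ ρW g⁻¹, hUmem g φ φ.2⟩
            map_add' := by
              intro φ φ'
              apply Subtype.ext
              ext w
              simp
            map_smul' := by
              intro cc φ
              apply Subtype.ext
              ext w
              simp }
        map_one' := by
          apply LinearMap.ext
          intro φ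
          apply Subtype.ext
          ext w
          simp
        map_mul' := by
          intro g₁ g₂
          apply LinearMap.ext
          intro φ
          apply Subtype.ext
          ext w
          simp [mul_inv_rev, map_mul, Module.End.mul_apply] }
    have hρU_apply : ∀ (g : G) (φ : ↥U') (w : W),
        ((ρU g φ : ↥U') : W →ₗ[F] V) w = ρV g ((φ : W →ₗ[F] V) (ρW g⁻¹ w)) :=
      fun g φ w => rfl
    have htriv : ∀ (n : ↥N) (φ : ↥U'), ρU (n : G) φ = φ := by
      intro n φ
      apply Subtype.ext
      apply LinearMap.ext
      intro w
      rw [hρU_apply]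
      have h1 : ρW ((n : G))⁻¹ w = σ n⁻¹ w := by
        rw [← hext n⁻¹]
        congr 1
      rw [h1, φ.2 n⁻¹ w, ← Module.End.mul_apply, ← map_mul]
      have h2 : (n : G) * ((n⁻¹ : ↥N) : G) = 1 := by simp
      rw [h2, map_one, Module.End.one_apply]
    let ev : (↥U' ⊗[F] W) →ₗ[F] V := TensorProduct.lift (U'.subtype)
    have hev_tmul : ∀ (φ : ↥U') (w : W), ev (φ ⊗ₜ[F] w) = (φ : W →ₗ[F] V) w := by
      intro φ w
      show TensorProduct.lift (U'.subtype) (φ ⊗ₜ[F] w) = _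
      rw [TensorProduct.lift.tmul]
      rfl
    have hevG : ∀ (g : G) (z : ↥U' ⊗[F] W), ev ((ρU.tprod ρW) g z) = ρV g (ev z) := by
      intro g z
      induction z using TensorProduct.induction_on with
      | zero => simp
      | tmul φ w =>
        rw [Representation.tprod_apply, TensorProduct.map_tmul, hev_tmul, hev_tmul,
          hρU_apply, hWinv' g w]
      | add x y ihx ihy => simp only [map_add, ihx, ihy]
    have hevN : ∀ (n : ↥N) (z : ↥U' ⊗[F] W),
        ev (LinearMap.lTensor ↥U' (σ n) z) = ρV (n : G) (ev z) := by
      intro n z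
      induction z using TensorProduct.induction_on with
      | zero => simp
      | tmul φ w =>
        rw [LinearMap.lTensor_tmul, hev_tmul, hev_tmul, φ.2 n w]
      | add x y ihx ihy => simp only [map_add, ihx, ihy]
    have hker : ∀ (n : ↥N), ∀ z ∈ LinearMap.ker ev,
        LinearMap.lTensor ↥U' (σ n) z ∈ LinearMap.ker ev := by
      intro n z hz
      rw [LinearMap.mem_ker] at hz ⊢
      rw [hevN n z, hz, map_zero]
    have hkerbot : LinearMap.ker ev = ⊥ := by
      by_contra hker0
      obtain ⟨z, hz, hz0⟩ := (Submodule.ne_bot_iff _).mp hker0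
      obtain ⟨φ, hφ0, hφk⟩ := gal_exists_pure σ hσ hEnd (LinearMap.ker ev) hker hz hz0
      apply hφ0
      apply Subtype.ext
      apply LinearMap.ext
      intro w
      have h3 := hφk w
      rw [LinearMap.mem_ker, hev_tmul] at h3
      simpa using h3
    have hinj : Function.Injective ev := by
      intro a b hab; have hab0 : a - b ∈ LinearMap.ker ev := by rw [LinearMap.mem_ker, map_sub, hab, sub_self]
      rw [hkerbot, Submodule.mem_bot, sub_eq_zero] at hab0; exact hab0
    obtain ⟨q, hq, eiso, heiso⟩ := hlies
    let φ₀ : W →ₗ[F] V := q.subtype ∘ₗ (eiso.symm : W →ₗ[F] ↥q)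
    have hφ₀_apply : ∀ w : W, φ₀ w = ((eiso.symm w : ↥q) : V) := fun w => rfl
    have hφ₀mem : φ₀ ∈ U' := by
      intro n w
      have h1 : eiso.symm (σ n w) =
          subRep F (ρV.comp N.subtype) q hq n (eiso.symm w) := by
        apply eiso.injective
        rw [LinearEquiv.apply_symm_apply, heiso, LinearEquiv.apply_symm_apply]
      rw [hφ₀_apply, hφ₀_apply, h1]
      rfl
    have hφ₀ne : φ₀ ≠ 0 := by
      intro h
      have h1 : φ₀ w₀ = 0 := by rw [h]; rfl
      rw [hφ₀_apply] at h1
      have h2 : eiso.symm w₀ = 0 := by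
        exact_mod_cast Submodule.coe_eq_zero.mp h1
      exact hw₀ (by simpa using congrArg eiso h2)
    let Φ₀ : ↥U' := ⟨φ₀, hφ₀mem⟩
    have hΦ₀ne : Φ₀ ≠ 0 := fun h => hφ₀ne (congrArg Subtype.val h)
    have hU'nt : Nontrivial ↥U' := ⟨⟨Φ₀, 0, hΦ₀ne⟩⟩
    have hrangeinv : ∀ g : G, ∀ v ∈ LinearMap.range ev, ρV g v ∈ LinearMap.range ev := by
      rintro g v ⟨z, rfl⟩
      exact ⟨(ρU.tprod ρW) g z, hevG g z⟩
    have hsurj : Function.Surjective ev := by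
      rcases hVirr.2 (LinearMap.range ev) hrangeinv with h | h
      · exfalso
        obtain ⟨w₁, hw₁⟩ : ∃ w, φ₀ w ≠ 0 := by
          by_contra hall
          push_neg at hall
          exact hφ₀ne (LinearMap.ext fun w => by rw [hall w]; rfl)
        have hmem : φ₀ w₁ ∈ LinearMap.range ev := ⟨Φ₀ ⊗ₜ[F] w₁, hev_tmul Φ₀ w₁⟩
        rw [h, Submodule.mem_bot] at hmem
        exact hw₁ hmem
      · rw [← LinearMap.range_eq_top]
        exact h
    let EV : (↥U' ⊗[F] W) ≃ₗ[F] V := LinearEquiv.ofBijective ev ⟨hinj, hsurj⟩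
    have hEV_apply : ∀ z, EV z = ev z := fun z => rfl
    have hUirr : IsIrreducibleRep F ρU := by
      refine ⟨hU'nt, ?_⟩
      intro P hPinv
      rcases eq_or_ne P ⊥ with h | h
      · exact Or.inl h
      right
      obtain ⟨φ₁, hφ₁P, hφ₁0⟩ := (Submodule.ne_bot_iff P).mp h
      set S : Submodule F (↥U' ⊗[F] W) :=
        Submodule.span F {z | ∃ φ ∈ P, ∃ w : W, z = φ ⊗ₜ[F] w} with hSdef
      have hSinv : ∀ g : G, ∀ z ∈ S, (ρU.tprod ρW) g z ∈ S := by
        intro g z hzS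
        induction hzS using Submodule.span_induction with
        | mem x hx =>
          obtain ⟨φ, hφ, w, rfl⟩ := hx
          rw [Representation.tprod_apply, TensorProduct.map_tmul]
          exact Submodule.subset_span ⟨ρU g φ, hPinv g φ hφ, ρW g w, rfl⟩
        | zero => rw [map_zero]; exact zero_mem S
        | add x y hx hy ihx ihy => rw [map_add]; exact add_mem ihx ihy
        | smul c x hx ihx => rw [map_smul]; exact Submodule.smul_mem S c ihx
      have hQinv : ∀ g : G, ∀ v ∈ S.map ev, ρV g v ∈ S.map ev := by
        rintro g v ⟨z, hzS, rfl⟩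
        exact ⟨(ρU.tprod ρW) g z, hSinv g z hzS, hevG g z⟩
      have hQtop : S.map ev = ⊤ := by
        rcases hVirr.2 (S.map ev) hQinv with hbot | htop
        · exfalso
          obtain ⟨w₁, hw₁⟩ : ∃ w, (φ₁ : W →ₗ[F] V) w ≠ 0 := by
            by_contra hall
            push_neg at hall
            exact hφ₁0 (Subtype.ext (LinearMap.ext fun w => by rw [hall w]; rfl))
          have hmem : (φ₁ : W →ₗ[F] V) w₁ ∈ S.map ev :=
            ⟨φ₁ ⊗ₜ[F] w₁, Submodule.subset_span ⟨φ₁, hφ₁P, w₁, rfl⟩, hev_tmul φ₁ w₁⟩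
          rw [hbot, Submodule.mem_bot] at hmem
          exact hw₁ hmem
        · exact htop
      rw [eq_top_iff]
      intro ψ _
      have hv : ev (ψ ⊗ₜ[F] w₀) ∈ S.map ev := by rw [hQtop]; trivial
      obtain ⟨s, hsS, hs⟩ := hv
      have hψS : (ψ ⊗ₜ[F] w₀ : ↥U' ⊗[F] W) ∈ S := by
        rw [← hinj hs]
        exact hsS
      obtain ⟨fdual, hfdual⟩ := gal_exists_dual (F := F) hw₀
      let L : (↥U' ⊗[F] W) →ₗ[F] ↥U' :=
        (TensorProduct.rid F ↥U').toLinearMap ∘ₗ LinearMap.lTensor ↥U' fdual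
      have hL_tmul : ∀ (φ : ↥U') (w : W), L (φ ⊗ₜ[F] w) = fdual w • φ := by
        intro φ w
        show (TensorProduct.rid F ↥U') (LinearMap.lTensor ↥U' fdual (φ ⊗ₜ[F] w)) = _
        rw [LinearMap.lTensor_tmul, TensorProduct.rid_tmul]
      have hLS : ∀ z ∈ S, L z ∈ P := by
        intro z hzS
        induction hzS using Submodule.span_induction with
        | mem x hx =>
          obtain ⟨φ, hφ, w, rfl⟩ := hx
          rw [hL_tmul]
          exact Submodule.smul_mem P _ hφ
        | zero => rw [map_zero]; exact zero_mem P
        | add x y hx hy ihx ihy => rw [map_add]; exact add_mem ihx ihy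
        | smul c x hx ihx => rw [map_smul]; exact Submodule.smul_mem P c ihx
      have h4 := hLS _ hψS
      rwa [hL_tmul, hfdual, one_smul] at h4
    refine ⟨↥U', inferInstance, inferInstance, ρU, hUirr, htriv, EV.symm, ?_⟩
    intro g v
    apply EV.injective
    rw [LinearEquiv.apply_symm_apply, hEV_apply, hevG, ← hEV_apply,
      LinearEquiv.apply_symm_apply]
  exact ⟨parta, partb, partc⟩
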